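/- arXiv:1911.01722 — 2 statements merged into one kernel-verified Lean document; each statement's English description precedes it below -/
import Mathlib

section
/- Let k be an even positive integer, m ≥ 1, and p = 2^m·k·n + 1 a prime for some n ≥ 1. Let g be an odd primitive root modulo p and set v = 2^{m-1}·k. For i = 0,1, let N_i = {ind_g(x) mod v : x ∈ [1,k], x ≡ i (mod 2)}. Suppose there exists a 2^m-element subset A ⊆ Z_v such that Z_v = A + N_i is a factorization (every element of Z_v is uniquely a sum a + t with a ∈ A, t ∈ N_i) for both i = 0 and i = 1. Then the set {g^{a+jv} mod 2p : a ∈ A, j ∈ [0, n-1]} is a quasi-perfect B[-k,k](2p) splitter set of size 2^m·n. -/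
/-- `b·[-k1,k2]* = {b·j mod q : -k1 ≤ j ≤ k2, j ≠ 0}` as a finset of `ZMod q`. -/
noncomputable def bStar (k1 k2 q : ℕ) (b : ZMod q) : Finset (ZMod q) :=
  ((Finset.Icc (-(k1 : ℤ)) (k2 : ℤ)).erase 0).image (fun j : ℤ => b * (j : ZMod q))

/-- `B` is a `B[-k1,k2](q)` splitter set. -/
def IsSplitter (k1 k2 q : ℕ) (B : Finset (ZMod q)) : Prop :=
  (∀ b ∈ B, (bStar k1 k2 q b).card = k1 + k2) ∧
  ((B : Set (ZMod q)).Pairwise fun b b' => Disjoint (bStar k1 k2 q b) (bStar k1 k2 q b'))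

/-- `B` is a perfect splitter set: `|B| = (q-1)/(k1+k2)` with exact division. -/
def IsPerfectSplitter (k1 k2 q : ℕ) (B : Finset (ZMod q)) : Prop :=
  IsSplitter k1 k2 q B ∧ (k1 + k2) * B.card = q - 1

theorem stmt_14 (k m n p : ℕ) (hk : 0 < k) (hkeven : Even k) (hm : 1 ≤ m)
    (hn : 1 ≤ n) (hp : p.Prime) (hpe : p = 2 ^ m * k * n + 1)
    (g : ℕ) (hgodd : Odd g) (hg : IsPrimitiveRoot (g : ZMod p) (p - 1))
    (ind : ℕ → ℕ)
    (hind : ∀ x, 1 ≤ x → x ≤ k → ind x ≤ p - 2 ∧ (g : ZMod p) ^ ind x = (x : ZMod p))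
    (A : Finset ℕ) (hAv : ∀ a ∈ A, a < 2 ^ (m - 1) * k) (hAcard : A.card = 2 ^ m)
    (hfact : ∀ i ∈ ({0, 1} : Finset ℕ), ∀ z : ZMod (2 ^ (m - 1) * k),
      ∃! q : ℕ × ℕ, q.1 ∈ A ∧ 1 ≤ q.2 ∧ q.2 ≤ k ∧ q.2 % 2 = i ∧
        ((q.1 + ind q.2 : ℕ) : ZMod (2 ^ (m - 1) * k)) = z) :
    IsSplitter k k (2 * p)
        ((A ×ˢ Finset.range n).image
          (fun q => (g : ZMod (2 * p)) ^ (q.1 + q.2 * (2 ^ (m - 1) * k)))) ∧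
      ((A ×ˢ Finset.range n).image
          (fun q => (g : ZMod (2 * p)) ^ (q.1 + q.2 * (2 ^ (m - 1) * k)))).card
        = 2 ^ m * n := by
  haveI : Fact p.Prime := ⟨hp⟩
  set V : ℕ := 2 ^ (m - 1) * k with hVdef
  have hV : 0 < V := by positivity
  have h2m : 2 ^ m = 2 * 2 ^ (m - 1) := by
    conv_lhs => rw [show m = (m - 1) + 1 from by omega]
    rw [pow_succ]; ring
  have hp1 : p - 1 = 2 * (V * n) := by
    rw [hpe, h2m, Nat.add_sub_cancel, hVdef]; ring
  have hp1pos : 0 < p - 1 := by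
    have : 0 < V * n := by positivity
    omega
  have hkp : k < p := by
    have h1 : 2 * k * 1 ≤ 2 ^ m * k * n := by
      apply Nat.mul_le_mul _ hn
      apply Nat.mul_le_mul_right
      calc 2 = 2 ^ 1 := rfl
        _ ≤ 2 ^ m := Nat.pow_le_pow_right (by norm_num) hm
    omega
  have hpodd : p % 2 = 1 := by
    have h2 : 2 ∣ 2 ^ m * k * n := Dvd.dvd.mul_right (Dvd.dvd.mul_right (dvd_pow_self 2 (by omega)) k) n
    omega
  have hcop : Nat.Coprime 2 p := by
    exact (Nat.prime_two.coprime_iff_not_dvd).mpr (by omega)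
  -- the two reduction ring homs
  set f2 : ZMod (2 * p) →+* ZMod 2 := ZMod.castHom (dvd_mul_right 2 p) _ with hf2def
  set fp : ZMod (2 * p) →+* ZMod p := ZMod.castHom (dvd_mul_left p 2) _ with hfpdef
  haveI : NeZero (2 * p) := ⟨by have := hp.pos; omega⟩
  have hinj : ∀ x y : ZMod (2 * p), f2 x = f2 y → fp x = fp y → x = y := by
    intro x y h2 hpq
    have hz : ∀ w : ZMod (2 * p), f2 w = 0 → fp w = 0 → w = 0 := by
      intro w hw2 hwp
      have hval : ((w.val : ℕ) : ZMod (2 * p)) = w := ZMod.natCast_rightInverse w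
      rw [← hval] at hw2 hwp
      rw [map_natCast] at hw2 hwp
      rw [ZMod.natCast_eq_zero_iff] at hw2 hwp
      rw [← hval, ZMod.natCast_eq_zero_iff]
      exact Nat.Coprime.mul_dvd_of_dvd_of_dvd hcop hw2 hwp
    have := hz (x - y) (by rw [map_sub, h2, sub_self]) (by rw [map_sub, hpq, sub_self])
    exact sub_eq_zero.mp this
  have hgu : IsUnit (g : ZMod p) := hg.isUnit hp1pos.ne'
  -- injectivity of powers of g mod p
  have gpiff : ∀ e f : ℕ, (g : ZMod p) ^ e = (g : ZMod p) ^ f ↔ e ≡ f [MOD p - 1] := by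
    intro e f
    have hu : ((hgu.unit : (ZMod p)ˣ) : ZMod p) = (g : ZMod p) := hgu.unit_spec
    have hou : orderOf (hgu.unit : (ZMod p)ˣ) = p - 1 := by
      rw [← orderOf_units, hu, ← hg.eq_orderOf]
    constructor
    · intro h
      have : hgu.unit ^ e = hgu.unit ^ f := by
        apply Units.ext
        rw [Units.val_pow_eq_pow_val, Units.val_pow_eq_pow_val, hu]
        exact h
      rw [pow_eq_pow_iff_modEq, hou] at this
      exact this
    · intro h
      have : hgu.unit ^ e = hgu.unit ^ f := by
        rw [pow_eq_pow_iff_modEq, hou]; exact h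
      calc (g : ZMod p) ^ e = ((hgu.unit ^ e : (ZMod p)ˣ) : ZMod p) := by
            rw [Units.val_pow_eq_pow_val, hu]
        _ = ((hgu.unit ^ f : (ZMod p)ˣ) : ZMod p) := by rw [this]
        _ = (g : ZMod p) ^ f := by rw [Units.val_pow_eq_pow_val, hu]
  have hgpow1 : (g : ZMod p) ^ (p - 1) = 1 := hg.pow_eq_one
  have hneg1 : (g : ZMod p) ^ (V * n) = -1 := by
    have hsq : ((g : ZMod p) ^ (V * n)) ^ 2 = 1 := by
      rw [← pow_mul, show V * n * 2 = p - 1 from by omega, hgpow1]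
    have hfac : ((g : ZMod p) ^ (V * n) - 1) * ((g : ZMod p) ^ (V * n) + 1) = 0 := by
      ring_nf
      linear_combination hsq
    rcases mul_eq_zero.mp hfac with h | h
    · exfalso
      have h1 : (g : ZMod p) ^ (V * n) = 1 := by linear_combination h
      rw [hg.pow_eq_one_iff_dvd] at h1
      have hVn : 0 < V * n := by positivity
      have := Nat.le_of_dvd hVn h1
      omega
    · linear_combination h
  have hf2g : f2 ((g : ZMod (2 * p))) = 1 := by
    rw [map_natCast]
    have h1 : ((g : ℕ) : ZMod 2) = ((1 : ℕ) : ZMod 2) :=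
      (ZMod.natCast_eq_natCast_iff' _ _ _).mpr (by have := Nat.odd_iff.mp hgodd; omega)
    simpa using h1
  have hfpg : fp ((g : ZMod (2 * p))) = (g : ZMod p) := map_natCast fp g
  have hG1 : (g : ZMod (2 * p)) ^ (p - 1) = 1 := by
    apply hinj
    · rw [map_pow, hf2g, one_pow, map_one]
    · rw [map_pow, hfpg, hgpow1, map_one]
  have hGu : IsUnit (g : ZMod (2 * p)) := IsUnit.of_pow_eq_one hG1 (by omega)
  -- cardinality of the index set for each bStar
  have hScard : ((Finset.Icc (-(k : ℤ)) (k : ℤ)).erase 0).card = 2 * k := by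
    rw [Finset.card_erase_of_mem (by simp [Finset.mem_Icc])]
    rw [Int.card_Icc]
    omega
  have hSinj : ∀ b : ZMod (2 * p), IsUnit b →
      Set.InjOn (fun j : ℤ => b * (j : ZMod (2 * p)))
        ((Finset.Icc (-(k : ℤ)) (k : ℤ)).erase 0) := by
    intro b hb s hs t ht h
    simp only [Finset.coe_erase, Set.mem_diff, Finset.mem_coe, Finset.mem_Icc,
      Set.mem_singleton_iff, Finset.mem_erase] at hs ht
    have h2 : ((s : ℤ) : ZMod (2 * p)) = ((t : ℤ) : ZMod (2 * p)) := hb.mul_left_cancel h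
    rw [ZMod.intCast_eq_intCast_iff] at h2
    have hd := h2.dvd
    have h0 : t - s = 0 := by
      apply Int.eq_zero_of_abs_lt_dvd hd
      rw [abs_lt]
      push_cast
      omega
    omega
  -- sign decomposition of a nonzero element of [-k,k]
  have hsign : ∀ s : ℤ, s ∈ (Finset.Icc (-(k : ℤ)) (k : ℤ)).erase 0 →
      ∃ x c : ℕ, 1 ≤ x ∧ x ≤ k ∧ (c = 0 ∨ c = V * n) ∧
        ((s : ZMod p) = (g : ZMod p) ^ (c + ind x)) ∧
        ((s : ZMod 2) = ((x : ℕ) : ZMod 2)) := by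
    intro s hs
    rw [Finset.mem_erase, Finset.mem_Icc] at hs
    obtain ⟨hs0, hsl, hsr⟩ := hs
    rcases lt_or_gt_of_ne hs0 with hneg | hpos
    · have hx : (((-s).toNat : ℕ) : ℤ) = -s := Int.toNat_of_nonneg (by omega)
      refine ⟨(-s).toNat, V * n, by omega, by omega, Or.inr rfl, ?_, ?_⟩
      · have h1 : (g : ZMod p) ^ ind (-s).toNat = (((-s).toNat : ℕ) : ZMod p) :=
          (hind _ (by omega) (by omega)).2
        have h2 : (((-s).toNat : ℕ) : ZMod p) = -((s : ℤ) : ZMod p) := by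
          have := congrArg (fun w : ℤ => (w : ZMod p)) hx
          push_cast at this
          rw [this]
        rw [pow_add, hneg1, h1, h2]
        ring
      · have h2 : (((-s).toNat : ℕ) : ZMod 2) = -((s : ℤ) : ZMod 2) := by
          have := congrArg (fun w : ℤ => (w : ZMod 2)) hx
          push_cast at this
          rw [this]
        rw [h2]
        have hn2 : ∀ w : ZMod 2, w = -w := by decide
        exact hn2 _
    · have hx : ((s.toNat : ℕ) : ℤ) = s := Int.toNat_of_nonneg (by omega)
      have h2 : ((s.toNat : ℕ) : ZMod p) = ((s : ℤ) : ZMod p) := by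
        have := congrArg (fun w : ℤ => (w : ZMod p)) hx
        push_cast at this
        rw [this]
      have h3 : ((s.toNat : ℕ) : ZMod 2) = ((s : ℤ) : ZMod 2) := by
        have := congrArg (fun w : ℤ => (w : ZMod 2)) hx
        push_cast at this
        rw [this]
      refine ⟨s.toNat, 0, by omega, by omega, Or.inl rfl, ?_, h3.symm⟩
      rw [zero_add, (hind _ (by omega) (by omega)).2, h2]
  -- key divisibility cancellation
  have key : ∀ w : ℤ, ((2 : ℤ) * (V * n)) ∣ (V : ℤ) * w → |w| < 2 * n → w = 0 := by
    intro w hdvd habs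
    obtain ⟨u, hu⟩ := hdvd
    have hVne : (V : ℤ) ≠ 0 := by exact_mod_cast hV.ne'
    have hw : w = 2 * n * u := mul_left_cancel₀ hVne (by linarith)
    exact Int.eq_zero_of_abs_lt_dvd ⟨u, hw⟩ habs
  refine ⟨⟨?_, ?_⟩, ?_⟩
  · -- each bStar has 2k elements
    intro b hb
    simp only [Finset.mem_image] at hb
    obtain ⟨q, hq, rfl⟩ := hb
    unfold bStar
    rw [Finset.card_image_of_injOn (hSinj _ (hGu.pow _)), hScard]
    omega
  · -- pairwise disjointness
    intro b hb b' hb' hne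
    simp only [Finset.coe_image, Set.mem_image, Finset.mem_coe, Finset.mem_product,
      Finset.mem_range] at hb hb'
    obtain ⟨⟨a, j⟩, ⟨haA, hjn⟩, rfl⟩ := hb
    obtain ⟨⟨a', j'⟩, ⟨haA', hjn'⟩, rfl⟩ := hb'
    rw [Finset.disjoint_left]
    intro z hz hz'
    simp only [bStar, Finset.mem_image] at hz hz'
    obtain ⟨s, hs, hzs⟩ := hz
    obtain ⟨t, ht, hzt⟩ := hz'
    have E : (g : ZMod (2 * p)) ^ (a + j * V) * ((s : ℤ) : ZMod (2 * p)) =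
        (g : ZMod (2 * p)) ^ (a' + j' * V) * ((t : ℤ) : ZMod (2 * p)) := hzs.trans hzt.symm
    obtain ⟨x, c, hx1, hxk, hc, hsp, hs2⟩ := hsign s hs
    obtain ⟨y, c', hy1, hyk, hc', htp, ht2⟩ := hsign t ht
    have E2 : ((s : ℤ) : ZMod 2) = ((t : ℤ) : ZMod 2) := by
      have h := congrArg f2 E
      rwa [map_mul, map_mul, map_pow, map_pow, hf2g, one_pow, one_pow, one_mul, one_mul,
        map_intCast, map_intCast] at h
    have hpar : x % 2 = y % 2 := by
      rw [hs2, ht2] at E2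
      have := (ZMod.natCast_eq_natCast_iff' _ _ _).mp E2
      omega
    have Ep : (g : ZMod p) ^ (a + j * V + (c + ind x)) =
        (g : ZMod p) ^ (a' + j' * V + (c' + ind y)) := by
      have h := congrArg fp E
      rw [map_mul, map_mul, map_pow, map_pow, hfpg, map_intCast, map_intCast, hsp, htp] at h
      rw [pow_add (g : ZMod p) (a + j * V) (c + ind x),
        pow_add (g : ZMod p) (a' + j' * V) (c' + ind y)]
      exact h
    have hME : a + j * V + (c + ind x) ≡ a' + j' * V + (c' + ind y) [MOD p - 1] :=
      (gpiff _ _).mp Ep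
    have hMV : ((a + ind x : ℕ) : ZMod V) = ((a' + ind y : ℕ) : ZMod V) := by
      have h1 : a + j * V + (c + ind x) ≡ a' + j' * V + (c' + ind y) [MOD V] :=
        Nat.ModEq.of_dvd ⟨2 * n, by rw [hp1]; ring⟩ hME
      have h2 := (ZMod.natCast_eq_natCast_iff _ _ _).mpr h1
      rcases hc with rfl | rfl <;> rcases hc' with rfl | rfl <;>
      · push_cast [ZMod.natCast_self] at h2
        push_cast
        linear_combination h2
    have hxmem : x % 2 ∈ ({0, 1} : Finset ℕ) := by
      rcases Nat.mod_two_eq_zero_or_one x with h | h <;> simp [h]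
    obtain ⟨q0, _, huniq⟩ := hfact (x % 2) hxmem ((a + ind x : ℕ) : ZMod V)
    have e1 := huniq (a, x) ⟨haA, hx1, hxk, rfl, rfl⟩
    have e2 := huniq (a', y) ⟨haA', hy1, hyk, hpar.symm, hMV.symm⟩
    have exy : a = a' ∧ x = y := by
      have h := e1.trans e2.symm
      exact ⟨congrArg Prod.fst h, congrArg Prod.snd h⟩
    obtain ⟨rfl, rfl⟩ : a = a' ∧ x = y := exy
    -- now cancel and conclude j = j'
    have hdvd' : ((2 : ℤ) * (V * n)) ∣
        ((j' : ℤ) * V + (c' : ℤ)) - ((j : ℤ) * V + (c : ℤ)) := by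
      have hd := hME.dvd
      rw [hp1] at hd
      have : (((a + j' * V + (c' + ind x) : ℕ) : ℤ) - ((a + j * V + (c + ind x) : ℕ) : ℤ))
          = ((j' : ℤ) * V + (c' : ℤ)) - ((j : ℤ) * V + (c : ℤ)) := by push_cast; ring
      rw [this] at hd
      exact_mod_cast hd
    have hjj : j = j' := by
      rcases hc with rfl | rfl <;> rcases hc' with rfl | rfl
      · have h0 := key ((j' : ℤ) - j) (by convert hdvd' using 1; push_cast; ring)
          (by rw [abs_lt]; constructor <;> push_cast <;> omega)
        omega
      · have h0 := key ((j' : ℤ) + n - j) (by convert hdvd' using 1; push_cast; ring)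
          (by rw [abs_lt]; constructor <;> push_cast <;> omega)
        omega
      · have h0 := key ((j' : ℤ) - (j + n)) (by convert hdvd' using 1; push_cast; ring)
          (by rw [abs_lt]; constructor <;> push_cast <;> omega)
        omega
      · have h0 := key ((j' : ℤ) - j) (by convert hdvd' using 1; push_cast; ring)
          (by rw [abs_lt]; constructor <;> push_cast <;> omega)
        omega
    exact hne (by rw [hjj])
  · -- cardinality
    rw [Finset.card_image_of_injOn, Finset.card_product, hAcard, Finset.card_range]
    intro q hq q' hq' h
    simp only [Finset.coe_product, Set.mem_prod, Finset.mem_coe, Finset.mem_range] at hq hq'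
    obtain ⟨hq1, hq2⟩ := hq
    obtain ⟨hq1', hq2'⟩ := hq'
    have hb1 := hAv _ hq1
    have hb1' := hAv _ hq1'
    have hmeq : q.1 + q.2 * V ≡ q'.1 + q'.2 * V [MOD p - 1] := by
      have h2 := congrArg fp h
      rw [map_pow, map_pow, hfpg] at h2
      exact (gpiff _ _).mp h2
    have h3 : (n - 1) * V + V = n * V := by
      have hn1 : n - 1 + 1 = n := by omega
      calc (n - 1) * V + V = (n - 1 + 1) * V := by ring
        _ = n * V := by rw [hn1]
    have h5 : n * V = V * n := Nat.mul_comm _ _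
    have hlt : q.1 + q.2 * V < p - 1 := by
      have h4 : q.2 * V ≤ (n - 1) * V := Nat.mul_le_mul_right _ (by omega)
      omega
    have hlt' : q'.1 + q'.2 * V < p - 1 := by
      have h4 : q'.2 * V ≤ (n - 1) * V := Nat.mul_le_mul_right _ (by omega)
      omega
    have heq : q.1 + q.2 * V = q'.1 + q'.2 * V := by
      have := hmeq
      unfold Nat.ModEq at this
      rwa [Nat.mod_eq_of_lt hlt, Nat.mod_eq_of_lt hlt'] at this
    have hj : q.2 = q'.2 := by
      have e1 : (q.1 + q.2 * V) / V = q.2 := by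
        rw [mul_comm, Nat.add_mul_div_left _ _ hV, Nat.div_eq_of_lt hb1]
        omega
      have e1' : (q'.1 + q'.2 * V) / V = q'.2 := by
        rw [mul_comm, Nat.add_mul_div_left _ _ hV, Nat.div_eq_of_lt hb1']
        omega
      rw [← e1, ← e1', heq]
    have ha : q.1 = q'.1 := by
      have hvv : q.2 * V = q'.2 * V := by rw [hj]
      omega
    exact Prod.ext ha hj
end

section
/- Let p ≡ 1 (mod 8) be a prime such that neither 4 nor -4 lies in the multiplicative subgroup ⟨6,16⟩ of Z_p* generated by 6 and 16. Then -1 ∈ ⟨6,16⟩, and the coset 2·⟨6,16⟩ has order 4 in the quotient group ⟨-1,2,3⟩/⟨6,16⟩, with ⟨2·⟨6,16⟩⟩ = {⟨6,16⟩, 2⟨6,16⟩, 3⟨6,16⟩, 4⟨6,16⟩}. -/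
theorem stmt_18 (p : ℕ) (hp : p.Prime) (hmod : p % 8 = 1)
    (h4 : (4 : ZMod p) ∉ Submonoid.closure ({6, 16} : Set (ZMod p)))
    (h4' : (-4 : ZMod p) ∉ Submonoid.closure ({6, 16} : Set (ZMod p))) :
    (-1 : ZMod p) ∈ Submonoid.closure ({6, 16} : Set (ZMod p)) ∧
      (2 : ZMod p) ∉ Submonoid.closure ({6, 16} : Set (ZMod p)) ∧
      (8 : ZMod p) ∉ Submonoid.closure ({6, 16} : Set (ZMod p)) ∧
      (16 : ZMod p) ∈ Submonoid.closure ({6, 16} : Set (ZMod p)) ∧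
      (∀ x : ZMod p, x ∈ Submonoid.closure ({-1, 2, 3} : Set (ZMod p)) →
        ∃ i ∈ ({1, 2, 3, 4} : Finset ℕ),
          ∃ y ∈ Submonoid.closure ({6, 16} : Set (ZMod p)), x = (i : ZMod p) * y) := by
  classical
  haveI := Fact.mk hp
  set Hm := Submonoid.closure ({6, 16} : Set (ZMod p)) with hHmdef
  have hp2 : 2 ≤ p := hp.two_le
  have hp17 : 17 ≤ p := by
    by_contra h
    push_neg at h
    interval_cases p <;> first | omega | (exact absurd hp (by decide))
  have hne : ∀ n : ℕ, 0 < n → n < 17 → ((n : ZMod p) ≠ 0) := by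
    intro n hn1 hn2 h
    rw [ZMod.natCast_eq_zero_iff] at h
    have := Nat.le_of_dvd hn1 h
    omega
  have h6ne : (6 : ZMod p) ≠ 0 := by
    have := hne 6 (by norm_num) (by norm_num); push_cast at this; exact this
  have h16ne : (16 : ZMod p) ≠ 0 := by
    have := hne 16 (by norm_num) (by norm_num); push_cast at this; exact this
  have h2ne : (2 : ZMod p) ≠ 0 := by
    have := hne 2 (by norm_num) (by norm_num); push_cast at this; exact this
  set u6 : (ZMod p)ˣ := Units.mk0 (6 : ZMod p) h6ne with hu6def
  set u16 : (ZMod p)ˣ := Units.mk0 (16 : ZMod p) h16ne with hu16def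
  set u2 : (ZMod p)ˣ := Units.mk0 (2 : ZMod p) h2ne with hu2def
  set H : Subgroup (ZMod p)ˣ := Subgroup.closure ({u6, u16} : Set (ZMod p)ˣ) with hHdef
  have hu6H : u6 ∈ H := Subgroup.subset_closure (Set.mem_insert _ _)
  have hu16H : u16 ∈ H := Subgroup.subset_closure (by simp)
  -- transfer lemma
  have key : ∀ x : (ZMod p)ˣ, (x : ZMod p) ∈ Hm ↔ x ∈ H := by
    intro x
    constructor
    · intro hx
      have himg : Hm ≤ Submonoid.map (Units.coeHom (ZMod p)) H.toSubmonoid := by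
        rw [hHmdef]
        apply Submonoid.closure_le.2
        rintro a (rfl | rfl)
        · exact ⟨u6, hu6H, rfl⟩
        · exact ⟨u16, hu16H, rfl⟩
      obtain ⟨u, hu, huv⟩ := himg hx
      exact (Units.ext huv) ▸ hu
    · intro hx
      let S : Subgroup (ZMod p)ˣ :=
        { carrier := {x : (ZMod p)ˣ | (x : ZMod p) ∈ Hm}
          one_mem' := by simpa using Hm.one_mem
          mul_mem' := fun {a b} ha hb => by simpa using Hm.mul_mem ha hb
          inv_mem' := by
            intro a ha
            have hn : 0 < orderOf a := orderOf_pos a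
            have hmul : a ^ (orderOf a - 1) * a = 1 := by
              rw [← pow_succ, Nat.sub_add_cancel hn, pow_orderOf_eq_one]
            have hinv : a⁻¹ = a ^ (orderOf a - 1) :=
              (eq_inv_of_mul_eq_one_left hmul).symm
            have : ((a⁻¹ : (ZMod p)ˣ) : ZMod p) = ((a : ZMod p)) ^ (orderOf a - 1) := by
              rw [hinv]; push_cast; ring
            simpa [this] using Hm.pow_mem ha (orderOf a - 1) }
      have hle : H ≤ S := by
        rw [hHdef]
        apply Subgroup.closure_le S |>.2
        rintro a (rfl | rfl)
        · simpa [S, hu6def] using (Submonoid.subset_closure (Set.mem_insert _ _) : (6 : ZMod p) ∈ Hm)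
        · simpa [S, hu16def] using (Submonoid.subset_closure (by simp) : (16 : ZMod p) ∈ Hm)
      exact hle hx
  have h6m : (6 : ZMod p) ∈ Hm := Submonoid.subset_closure (Set.mem_insert _ _)
  have h16m : (16 : ZMod p) ∈ Hm := Submonoid.subset_closure (by simp)
  have h6inv : (6 : ZMod p)⁻¹ ∈ Hm := by
    have := (key u6⁻¹).2 (H.inv_mem hu6H)
    simpa [hu6def] using this
  have h16inv : (16 : ZMod p)⁻¹ ∈ Hm := by
    have := (key u16⁻¹).2 (H.inv_mem hu16H)
    simpa [hu16def] using this
  -- -1 ∈ H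
  have hu2sq : u2 ^ 2 ∉ H := by
    intro h
    apply h4
    have := (key (u2 ^ 2)).2 h
    have hv : ((u2 ^ 2 : (ZMod p)ˣ) : ZMod p) = 4 := by
      push_cast [hu2def]; norm_num
    rwa [hv] at this
  have hneg1H : (-1 : (ZMod p)ˣ) ∈ H := by
    by_contra hA
    have hAB : (-1 : (ZMod p)ˣ) * u2 ^ 2 ∉ H := by
      intro h
      apply h4'
      have := (key _).2 h
      have hv : (((-1 : (ZMod p)ˣ) * u2 ^ 2 : (ZMod p)ˣ) : ZMod p) = -4 := by
        push_cast [hu2def]; norm_num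
      rwa [hv] at this
    haveI : IsCyclic ((ZMod p)ˣ ⧸ H) :=
      isCyclic_of_surjective (QuotientGroup.mk' H) (QuotientGroup.mk'_surjective H)
    haveI : Fintype ((ZMod p)ˣ ⧸ H) := Fintype.ofFinite _
    have card_le := IsCyclic.card_pow_eq_one_le (α := (ZMod p)ˣ ⧸ H) (n := 2) (by norm_num)
    set a : (ZMod p)ˣ ⧸ H := ((-1 : (ZMod p)ˣ) : (ZMod p)ˣ ⧸ H) with hadef
    set b : (ZMod p)ˣ ⧸ H := ((u2 ^ 2 : (ZMod p)ˣ) : (ZMod p)ˣ ⧸ H) with hbdef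
    have ha2 : a ^ 2 = 1 := by
      rw [hadef, ← QuotientGroup.mk_pow]
      exact (QuotientGroup.eq_one_iff _).2 (by simpa using H.one_mem)
    have hb2 : b ^ 2 = 1 := by
      rw [hbdef, ← QuotientGroup.mk_pow]
      refine (QuotientGroup.eq_one_iff _).2 ?_
      have : (u2 ^ 2) ^ 2 = u16 := by
        ext; push_cast [hu2def, hu16def]; norm_num
      rw [this]; exact hu16H
    have hane : a ≠ 1 := fun h => hA ((QuotientGroup.eq_one_iff _).1 h)
    have hbne : b ≠ 1 := fun h => hu2sq ((QuotientGroup.eq_one_iff _).1 h)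
    have habne : a * b ≠ 1 := by
      intro h
      apply hAB
      apply (QuotientGroup.eq_one_iff _).1
      rw [QuotientGroup.mk_mul]
      exact h
    have hab : a ≠ b := by
      intro h
      rw [hadef, hbdef, QuotientGroup.eq] at h
      apply hAB
      have e : (-1 : (ZMod p)ˣ)⁻¹ * u2 ^ 2 = -1 * u2 ^ 2 := by
        norm_num
      rwa [e] at h
    have hab2 : (a * b) ^ 2 = 1 := by
      rw [hadef, hbdef, ← QuotientGroup.mk_mul, ← QuotientGroup.mk_pow]
      refine (QuotientGroup.eq_one_iff _).2 ?_
      have e : ((-1 : (ZMod p)ˣ) * u2 ^ 2) ^ 2 = u16 := by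
        ext; push_cast [hu2def, hu16def]; norm_num
      rw [e]; exact hu16H
    have h1 : a ≠ a * b := by
      intro h
      rw [hadef, hbdef, ← QuotientGroup.mk_mul, QuotientGroup.eq] at h
      apply hu2sq
      have e : (-1 : (ZMod p)ˣ)⁻¹ * (-1 * u2 ^ 2) = u2 ^ 2 := by
        group
      rwa [e] at h
    have h2 : b ≠ a * b := by
      intro h
      rw [hadef, hbdef, ← QuotientGroup.mk_mul, QuotientGroup.eq] at h
      apply hA
      have e : (u2 ^ 2)⁻¹ * (-1 * u2 ^ 2) = -1 := by
        have := mul_comm ((-1 : (ZMod p)ˣ)) (u2 ^ 2)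
        rw [this, ← mul_assoc, inv_mul_cancel, one_mul]
      rwa [e] at h
    have hcard : ({1, a, b, a * b} : Finset ((ZMod p)ˣ ⧸ H)).card = 4 := by
      rw [Finset.card_insert_of_notMem (by simp [hane.symm, hbne.symm, habne.symm]),
        Finset.card_insert_of_notMem (by simp [hab, h1]),
        Finset.card_insert_of_notMem (by simp [h2]),
        Finset.card_singleton]
    have h4le : ({1, a, b, a * b} : Finset ((ZMod p)ˣ ⧸ H)).card ≤ 2 :=
      le_trans (Finset.card_le_card (by
        intro x hx
        simp only [Finset.mem_insert, Finset.mem_singleton] at hx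
        refine Finset.mem_filter.2 ⟨Finset.mem_univ _, ?_⟩
        rcases hx with rfl | rfl | rfl | rfl
        · exact one_pow 2
        · exact ha2
        · exact hb2
        · exact hab2)) card_le
    omega
  have hneg1m : (-1 : ZMod p) ∈ Hm := by
    have := (key (-1)).2 hneg1H
    simpa using this
  have h2n : (2 : ZMod p) ∉ Hm := by
    intro h
    apply h4
    have := Hm.mul_mem h h
    have e : (2 : ZMod p) * 2 = 4 := by norm_num
    rwa [e] at this
  have h8n : (8 : ZMod p) ∉ Hm := by
    intro h
    apply h4
    have h64 : (64 : ZMod p) ∈ Hm := by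
      have := Hm.mul_mem h h
      have e : (8 : ZMod p) * 8 = 64 := by norm_num
      rwa [e] at this
    have := Hm.mul_mem h64 h16inv
    have e : (64 : ZMod p) * 16⁻¹ = 4 := by
      field_simp
      norm_num
    rwa [e] at this
  refine ⟨hneg1m, h2n, h8n, h16m, ?_⟩
  intro x hx
  refine Submonoid.closure_induction ?_ ?_ ?_ hx
  · rintro z (rfl | rfl | rfl)
    · exact ⟨1, by decide, -1, hneg1m, by push_cast; ring⟩
    · exact ⟨2, by decide, 1, Hm.one_mem, by push_cast; ring⟩
    · exact ⟨3, by decide, 1, Hm.one_mem, by push_cast; ring⟩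
  · exact ⟨1, by decide, 1, Hm.one_mem, by push_cast; ring⟩
  · rintro x y hxc hyc ⟨i, hi, a, ha, rfl⟩ ⟨j, hj, b, hb, rfl⟩
    have hab : a * b ∈ Hm := Hm.mul_mem ha hb
    fin_cases hi <;> fin_cases hj
    · exact ⟨1, by decide, a * b, hab, by push_cast; ring⟩
    · exact ⟨2, by decide, a * b, hab, by push_cast; ring⟩
    · exact ⟨3, by decide, a * b, hab, by push_cast; ring⟩
    · exact ⟨4, by decide, a * b, hab, by push_cast; ring⟩
    · exact ⟨2, by decide, a * b, hab, by push_cast; ring⟩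
    · exact ⟨4, by decide, a * b, hab, by push_cast; ring⟩
    · exact ⟨1, by decide, 6 * (a * b), Hm.mul_mem h6m hab, by push_cast; ring⟩
    · exact ⟨3, by decide, (16 * 6⁻¹) * (a * b), Hm.mul_mem (Hm.mul_mem h16m h6inv) hab, by
        push_cast; field_simp; ring⟩
    · exact ⟨3, by decide, a * b, hab, by push_cast; ring⟩
    · exact ⟨1, by decide, 6 * (a * b), Hm.mul_mem h6m hab, by push_cast; ring⟩
    · exact ⟨4, by decide, (6 * 6 * 16⁻¹) * (a * b),
        Hm.mul_mem (Hm.mul_mem (Hm.mul_mem h6m h6m) h16inv) hab, by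
        push_cast; field_simp; ring⟩
    · exact ⟨2, by decide, 6 * (a * b), Hm.mul_mem h6m hab, by push_cast; ring⟩
    · exact ⟨4, by decide, a * b, hab, by push_cast; ring⟩
    · exact ⟨3, by decide, (16 * 6⁻¹) * (a * b), Hm.mul_mem (Hm.mul_mem h16m h6inv) hab, by
        push_cast; field_simp; ring⟩
    · exact ⟨2, by decide, 6 * (a * b), Hm.mul_mem h6m hab, by push_cast; ring⟩
    · exact ⟨1, by decide, 16 * (a * b), Hm.mul_mem h16m hab, by push_cast; ring⟩
end
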